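/- Let K be an algebraic closure of ℚ and let X*(K) = {(x₁,x₂,x₃) ∈ K³ : x₁²+x₂²+x₃² = 3x₁x₂x₃ and (x₁,x₂,x₃) ≠ (0,0,0)}. Then there is no nonempty finite subset of X*(K) that is invariant under all three coordinate permutations and the three Vieta involutions R₁, R₂, R₃ (where R₃(x₁,x₂,x₃) = (x₁,x₂,3x₁x₂−x₃) and R₁, R₂ act analogously). Equivalently, the group Γ generated by these maps has no finite orbit on X*(K). -/

import Mathlib

/-- If a two-sided linear recurrence `u (k+2) = t * u (k+1) - u k` over `ℂ` is periodic
and does not start at `(0,0)`, then `t = λ + λ⁻¹` for some `λ` of modulus 1. -/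
lemma periodic_rec_aux (t : ℂ) (u : ℕ → ℂ)
    (hrec : ∀ k, u (k + 2) = t * u (k + 1) - u k)
    (N : ℕ) (hN : 1 ≤ N) (h0 : u N = u 0) (h1 : u (N + 1) = u 1)
    (hnz : ¬ (u 0 = 0 ∧ u 1 = 0)) :
    ∃ l : ℂ, ‖l‖ = 1 ∧ t = l + l⁻¹ := by
  obtain ⟨s, hs⟩ := IsAlgClosed.exists_pow_nat_eq (t ^ 2 - 4) (n := 2) (by norm_num)
  set l : ℂ := (t + s) / 2 with hl
  set m : ℂ := (t - s) / 2 with hm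
  have hml : l * m = 1 := by
    rw [hl, hm]; linear_combination (-(1:ℂ)/4) * hs
  have hsum : l + m = t := by rw [hl, hm]; ring
  have hl2 : l ^ 2 = t * l - 1 := by
    rw [hl]; linear_combination ((1:ℂ)/4) * hs
  have hm2 : m ^ 2 = t * m - 1 := by
    rw [hm]; linear_combination ((1:ℂ)/4) * hs
  clear_value l m
  clear hs hl hm
  have habs1 : ∀ (x : ℂ) (n : ℕ), 1 ≤ n → x ^ n = 1 → ‖x‖ = 1 := by
    intro x n hn hxN
    have h1 : ‖x‖ ^ n = 1 := by rw [← norm_pow, hxN, norm_one]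
    have h2 : 0 ≤ ‖x‖ := norm_nonneg x
    rcases lt_trichotomy ‖x‖ 1 with h | h | h
    · have h3 : ‖x‖ ^ n < 1 := pow_lt_one₀ h2 h (by omega)
      rw [h1] at h3; exact absurd h3 (lt_irrefl 1)
    · exact h
    · have h3 : 1 < ‖x‖ ^ n := one_lt_pow₀ h (by omega)
      rw [h1] at h3; exact absurd h3 (lt_irrefl 1)
  have hinv : l⁻¹ = m := inv_eq_of_mul_eq_one_right hml
  have hinv' : m⁻¹ = l := inv_eq_of_mul_eq_one_right (by rw [mul_comm] at hml; exact hml)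
  by_cases hlm : l = m
  · have hl21 : l ^ 2 = 1 := by rw [sq]; nth_rewrite 2 [hlm]; exact hml
    exact ⟨l, habs1 l 2 (by norm_num) hl21, by rw [← hsum, hinv]⟩
  · have hd : l - m ≠ 0 := sub_ne_zero.mpr hlm
    set A : ℂ := (u 1 - m * u 0) / (l - m) with hA
    set B : ℂ := (l * u 0 - u 1) / (l - m) with hB
    have hu : ∀ k, u k = A * l ^ k + B * m ^ k := by
      intro k
      induction k using Nat.strong_induction_on with
      | _ k ih =>
        match k with
        | 0 => rw [hA, hB]; field_simp; ring
        | 1 => rw [hA, hB]; field_simp; ring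
        | (k + 2) =>
          rw [hrec k, ih (k + 1) (by omega), ih k (by omega)]
          linear_combination (-(A * l ^ k)) * hl2 - (B * m ^ k) * hm2
    have e1 : A * (l ^ N - 1) + B * (m ^ N - 1) = 0 := by
      have h := h0
      rw [hu N, hu 0] at h
      linear_combination h
    have e2 : A * l * (l ^ N - 1) + B * m * (m ^ N - 1) = 0 := by
      have h := h1
      rw [hu (N + 1), hu 1] at h
      linear_combination h
    have eA : A * (l ^ N - 1) = 0 := by
      have h : A * (l - m) * (l ^ N - 1) = 0 := by linear_combination e2 - m * e1
      rcases mul_eq_zero.mp h with h' | h'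
      · rcases mul_eq_zero.mp h' with h'' | h''
        · rw [h'', zero_mul]
        · exact absurd h'' hd
      · rw [h', mul_zero]
    have eB : B * (m ^ N - 1) = 0 := by
      have h : B * (m - l) * (m ^ N - 1) = 0 := by linear_combination e2 - l * e1
      rcases mul_eq_zero.mp h with h' | h'
      · rcases mul_eq_zero.mp h' with h'' | h''
        · rw [h'', zero_mul]
        · exact absurd h'' (sub_ne_zero.mpr (Ne.symm hlm))
      · rw [h', mul_zero]
    by_cases hA0 : A = 0
    · have hB0 : B ≠ 0 := by
        intro hB0
        exact hnz ⟨by rw [hu 0, hA0, hB0]; ring, by rw [hu 1, hA0, hB0]; ring⟩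
      have hmN : m ^ N = 1 :=
        sub_eq_zero.mp ((mul_eq_zero.mp eB).resolve_left hB0)
      exact ⟨m, habs1 m N hN hmN, by rw [← hsum, hinv']; ring⟩
    · have hlN : l ^ N = 1 :=
        sub_eq_zero.mp ((mul_eq_zero.mp eA).resolve_left hA0)
      exact ⟨l, habs1 l N hN hlN, by rw [← hsum, hinv]⟩

/-- Every coordinate of a point of a finite invariant set is real with `|3c| ≤ 2`. -/
lemma markoff_coord_real (F : Set (ℂ × ℂ × ℂ)) (hfin : F.Finite)
    (hsub : F ⊆ {x : ℂ × ℂ × ℂ |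
      x.1 ^ 2 + x.2.1 ^ 2 + x.2.2 ^ 2 = 3 * x.1 * x.2.1 * x.2.2 ∧ x ≠ (0, 0, 0)})
    (hP1 : ∀ x ∈ F, (x.2.1, x.1, x.2.2) ∈ F)
    (hR1 : ∀ x ∈ F, (3 * x.2.1 * x.2.2 - x.1, x.2.1, x.2.2) ∈ F)
    (a b c : ℂ) (h : (a, b, c) ∈ F) :
    c.im = 0 ∧ (3 * c.re) ^ 2 ≤ 4 := by
  classical
  set step : ℂ × ℂ → ℂ × ℂ := fun p => (p.2, 3 * c * p.2 - p.1) with hstep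
  have hstepinj : Function.Injective step := by
    intro p q hpq
    rw [hstep] at hpq
    simp only [Prod.ext_iff] at hpq ⊢
    obtain ⟨h1, h2⟩ := hpq
    refine ⟨?_, h1⟩
    rw [h1] at h2
    linear_combination -h2
  set v : ℕ → ℂ × ℂ := fun k => step^[k] (a, b) with hv
  have hvs : ∀ k, v (k + 1) = ((v k).2, 3 * c * (v k).2 - (v k).1) := by
    intro k
    rw [hv]
    simp only [Function.iterate_succ_apply']
    rfl
  set u : ℕ → ℂ := fun k => (v k).1 with hu
  have hu1 : ∀ k, u (k + 1) = (v k).2 := by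
    intro k; rw [hu]; simp only; rw [hvs k]
  have hrec : ∀ k, u (k + 2) = 3 * c * u (k + 1) - u k := by
    intro k
    have := hu1 (k + 1)
    rw [hvs k] at this
    rw [this, hu1 k]
  -- all pairs (v k) give points of F
  have hmem : ∀ k, ((v k).1, (v k).2, c) ∈ F := by
    intro k
    induction k with
    | zero => simpa [hv] using h
    | succ k ih =>
      have h1 := hR1 _ ih
      have h2 := hP1 _ h1
      simp only at h1 h2
      rw [hvs k]
      convert h2 using 3
      ring
  -- find a repetition
  have hVfin : Set.Finite ((fun x : ℂ × ℂ × ℂ => (x.1, x.2.1)) '' F) := hfin.image _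
  obtain ⟨i, -, j, -, hij, hvij⟩ :=
    Set.Infinite.exists_ne_map_eq_of_mapsTo (Set.infinite_univ (α := ℕ))
      (fun k _ => Set.mem_image_of_mem _ (hmem k) :
        Set.MapsTo v Set.univ ((fun x : ℂ × ℂ × ℂ => (x.1, x.2.1)) '' F)) hVfin
  -- wlog i < j
  wlog hij' : i < j generalizing i j
  · exact this j i hij.symm hvij.symm (by omega)
  -- pure periodicity
  have hper : v (j - i) = v 0 := by
    have hinj : Function.Injective (step^[i]) := Function.Injective.iterate hstepinj i
    apply hinj
    have h1 : step^[i] (v (j - i)) = v j := by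
      rw [hv]
      simp only [← Function.iterate_add_apply]
      congr 1
      omega
    have h2 : step^[i] (v 0) = v i := rfl
    have hvv : v i = v j := by simpa using hvij
    rw [h1, h2, hvv]
  set N := j - i with hNdef
  have hN : 1 ≤ N := by omega
  have hN0 : u N = u 0 := by rw [hu]; simp only; rw [hper]
  have hN1 : u (N + 1) = u 1 := by rw [hu1 N, hu1 0, hper]
  have hnz : ¬ (u 0 = 0 ∧ u 1 = 0) := by
    rintro ⟨h0, h1⟩
    have hab : a = 0 ∧ b = 0 := by
      constructor
      · have : u 0 = a := by rw [hu]; simp [hv]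
        rw [← this, h0]
      · have : u 1 = b := by rw [hu1 0]; simp [hv]
        rw [← this, h1]
    obtain ⟨ha, hb⟩ := hab
    obtain ⟨heq, hne⟩ := hsub h
    simp only [ha, hb] at heq hne
    have hc : c = 0 := by
      have : c ^ 2 = 0 := by linear_combination heq
      exact pow_eq_zero_iff (by norm_num) |>.mp this
    exact hne (by rw [hc])
  obtain ⟨l, habs, hl⟩ := periodic_rec_aux (3 * c) u hrec N hN hN0 hN1 hnz
  have hconj : l⁻¹ = (starRingEnd ℂ) l := Complex.inv_eq_conj habs
  rw [hconj] at hl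
  have h2re : (3 : ℂ) * c = ((2 * l.re : ℝ) : ℂ) := by rw [hl, Complex.add_conj]
  have him : c.im = 0 := by
    have := congrArg Complex.im h2re
    simpa using this
  have hre : 3 * c.re = 2 * l.re := by
    have := congrArg Complex.re h2re
    simpa using this
  refine ⟨him, ?_⟩
  rw [hre]
  have h1 : |l.re| ≤ ‖l‖ := Complex.abs_re_le_norm l
  rw [habs] at h1
  nlinarith [abs_nonneg l.re, sq_abs l.re]

/-- The complex version of the theorem. -/
lemma markoff_no_finite_orbit_complex :
    ¬ ∃ F : Set (ℂ × ℂ × ℂ), F.Nonempty ∧ F.Finite ∧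
        F ⊆ {x : ℂ × ℂ × ℂ |
          x.1 ^ 2 + x.2.1 ^ 2 + x.2.2 ^ 2 = 3 * x.1 * x.2.1 * x.2.2 ∧ x ≠ (0, 0, 0)} ∧
        (∀ x ∈ F, (x.2.1, x.1, x.2.2) ∈ F) ∧
        (∀ x ∈ F, (x.1, x.2.2, x.2.1) ∈ F) ∧
        (∀ x ∈ F, (x.2.2, x.2.1, x.1) ∈ F) ∧
        (∀ x ∈ F, (3 * x.2.1 * x.2.2 - x.1, x.2.1, x.2.2) ∈ F) ∧
        (∀ x ∈ F, (x.1, 3 * x.1 * x.2.2 - x.2.1, x.2.2) ∈ F) ∧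
        (∀ x ∈ F, (x.1, x.2.1, 3 * x.1 * x.2.1 - x.2.2) ∈ F) := by
  rintro ⟨F, hne, hfin, hsub, hP1, hP2, hP3, hR1, hR2, hR3⟩
  obtain ⟨⟨a, b, c⟩, h⟩ := hne
  have hc := markoff_coord_real F hfin hsub hP1 hR1 a b c h
  have ha := markoff_coord_real F hfin hsub hP1 hR1 c b a (hP3 _ h)
  have hb := markoff_coord_real F hfin hsub hP1 hR1 a c b (hP2 _ h)
  obtain ⟨heq, hne0⟩ := hsub h
  simp only at heq hne0
  set x := a.re with hx
  set y := b.re with hy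
  set z := c.re with hz
  have haa : a = (x : ℂ) := Complex.ext rfl (by simp [ha.1])
  have hbb : b = (y : ℂ) := Complex.ext rfl (by simp [hb.1])
  have hcc : c = (z : ℂ) := Complex.ext rfl (by simp [hc.1])
  rw [haa, hbb, hcc] at heq
  have heqr : x ^ 2 + y ^ 2 + z ^ 2 = 3 * x * y * z := by exact_mod_cast heq
  have hx2 : 9 * x ^ 2 ≤ 4 := by nlinarith [ha.2]
  have hy2 : 9 * y ^ 2 ≤ 4 := by nlinarith [hb.2]
  have hz2 : 9 * z ^ 2 ≤ 4 := by nlinarith [hc.2]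
  have hx0 : x = 0 := by
    have h1 : x ^ 2 ≤ 0 := by
      nlinarith [sq_nonneg (6 * z - 9 * x * y),
        mul_nonneg (by positivity : (0:ℝ) ≤ 9 * y ^ 2) (by linarith : (0:ℝ) ≤ 4 - 9 * x ^ 2)]
    nlinarith [sq_nonneg x]
  have hy0 : y = 0 := by
    have h1 : y ^ 2 ≤ 0 := by
      nlinarith [sq_nonneg (6 * z - 9 * x * y),
        mul_nonneg (by positivity : (0:ℝ) ≤ 9 * x ^ 2) (by linarith : (0:ℝ) ≤ 4 - 9 * y ^ 2)]
    nlinarith [sq_nonneg y]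
  have hz0 : z = 0 := by
    have h1 : z ^ 2 = 0 := by rw [hx0, hy0] at heqr; linarith [heqr]
    exact pow_eq_zero_iff (by norm_num) |>.mp h1
  apply hne0
  rw [haa, hbb, hcc, hx0, hy0, hz0]
  norm_num

theorem markoff_no_finite_orbit_char_zero
    (K : Type) [Field K] [Algebra ℚ K] [IsAlgClosure ℚ K] :
    ¬ ∃ F : Set (K × K × K), F.Nonempty ∧ F.Finite ∧
        F ⊆ {x : K × K × K |
          x.1 ^ 2 + x.2.1 ^ 2 + x.2.2 ^ 2 = 3 * x.1 * x.2.1 * x.2.2 ∧ x ≠ (0, 0, 0)} ∧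
        (∀ x ∈ F, (x.2.1, x.1, x.2.2) ∈ F) ∧
        (∀ x ∈ F, (x.1, x.2.2, x.2.1) ∈ F) ∧
        (∀ x ∈ F, (x.2.2, x.2.1, x.1) ∈ F) ∧
        (∀ x ∈ F, (3 * x.2.1 * x.2.2 - x.1, x.2.1, x.2.2) ∈ F) ∧
        (∀ x ∈ F, (x.1, 3 * x.1 * x.2.2 - x.2.1, x.2.2) ∈ F) ∧
        (∀ x ∈ F, (x.1, x.2.1, 3 * x.1 * x.2.1 - x.2.2) ∈ F) := by
  rintro ⟨F, hne, hfin, hsub, hP1, hP2, hP3, hR1, hR2, hR3⟩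
  have : Algebra.IsAlgebraic ℚ K := IsAlgClosure.isAlgebraic
  let φ : K →ₐ[ℚ] ℂ := IsAlgClosed.lift
  have hinj : Function.Injective φ := φ.toRingHom.injective
  set Φ : K × K × K → ℂ × ℂ × ℂ := fun p => (φ p.1, φ p.2.1, φ p.2.2) with hΦ
  apply markoff_no_finite_orbit_complex
  refine ⟨Φ '' F, hne.image Φ, hfin.image Φ, ?_, ?_, ?_, ?_, ?_, ?_, ?_⟩
  · rintro _ ⟨p, hp, rfl⟩
    obtain ⟨heq, hne0⟩ := hsub hp
    constructor
    · show (φ p.1) ^ 2 + (φ p.2.1) ^ 2 + (φ p.2.2) ^ 2 = 3 * φ p.1 * φ p.2.1 * φ p.2.2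
      have h' := congrArg φ heq
      rw [map_add, map_add, map_pow, map_pow, map_pow, map_mul, map_mul, map_mul,
        map_ofNat] at h'
      exact h'
    · simp only [hΦ, ne_eq, Prod.ext_iff]
      rintro ⟨h1, h2, h3⟩
      apply hne0
      have z1 : p.1 = 0 := by apply hinj; rw [h1]; exact (map_zero φ).symm
      have z2 : p.2.1 = 0 := by apply hinj; rw [h2]; exact (map_zero φ).symm
      have z3 : p.2.2 = 0 := by apply hinj; rw [h3]; exact (map_zero φ).symm
      rw [Prod.ext_iff, Prod.ext_iff]
      exact ⟨z1, z2, z3⟩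
  · rintro _ ⟨p, hp, rfl⟩
    exact ⟨_, hP1 p hp, rfl⟩
  · rintro _ ⟨p, hp, rfl⟩
    exact ⟨_, hP2 p hp, rfl⟩
  · rintro _ ⟨p, hp, rfl⟩
    exact ⟨_, hP3 p hp, rfl⟩
  · rintro _ ⟨p, hp, rfl⟩
    refine ⟨_, hR1 p hp, ?_⟩
    simp only [hΦ, map_sub, map_mul, map_ofNat]
  · rintro _ ⟨p, hp, rfl⟩
    refine ⟨_, hR2 p hp, ?_⟩
    simp only [hΦ, map_sub, map_mul, map_ofNat]
  · rintro _ ⟨p, hp, rfl⟩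
    refine ⟨_, hR3 p hp, ?_⟩
    simp only [hΦ, map_sub, map_mul, map_ofNat]
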